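/- Let (Ω, ℱ, ℙ) be a probability space with filtration {ℱ_k}_{k≥0}, let K ∈ ℕ, and let U_1, …, U_K be nonnegative integrable ℱ-measurable random variables such that Σ_{k=1}^K U_k ≤ λ_0 almost surely for a constant λ_0 > 0. Set A_K := Σ_{k=1}^K E[U_k | ℱ_{k−1}]. Then for every integer r ≥ 1 the moment bound E[A_K^r] ≤ r!·λ_0^r holds. -/

import Mathlib

open MeasureTheory

private lemma icc_sum_eq_range {M : Type*} [AddCommMonoid M] (f : ℕ → M) (K : ℕ) :
    ∑ k ∈ Finset.Icc 1 K, f k = ∑ i ∈ Finset.range K, f (i + 1) := by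
  induction K with
  | zero => simp
  | succ n ih => rw [Finset.sum_Icc_succ_top (by omega), ih, Finset.sum_range_succ]

private lemma pow_sub_pow_le_aux (n : ℕ) : ∀ x y : ℝ, 0 ≤ y → y ≤ x →
    x ^ (n + 1) - y ^ (n + 1) ≤ (n + 1) * (x - y) * x ^ n := by
  induction n with
  | zero => intro x y hy hxy; simp
  | succ n ih =>
    intro x y hy hxy
    have h1 := ih x y hy hxy
    have hx : 0 ≤ x := hy.trans hxy
    have h2 : y ^ (n + 1) ≤ x ^ (n + 1) := pow_le_pow_left₀ hy hxy (n + 1)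
    have h3 : x * (x ^ (n + 1) - y ^ (n + 1)) ≤ x * ((n + 1) * (x - y) * x ^ n) :=
      mul_le_mul_of_nonneg_left h1 hx
    have h4 : (x - y) * y ^ (n + 1) ≤ (x - y) * x ^ (n + 1) :=
      mul_le_mul_of_nonneg_left h2 (by linarith)
    have hexp : x ^ (n + 1 + 1) - y ^ (n + 1 + 1) =
        x * (x ^ (n + 1) - y ^ (n + 1)) + (x - y) * y ^ (n + 1) := by ring
    have hgoal : ((n + 1 : ℕ) + 1 : ℝ) * (x - y) * x ^ (n + 1) =
        x * (((n : ℝ) + 1) * (x - y) * x ^ n) + (x - y) * x ^ (n + 1) := by push_cast; ring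
    linarith

theorem condexp_sum_moment_bound {Ω : Type*} [m0 : MeasurableSpace Ω] (μ : Measure Ω)
    [IsProbabilityMeasure μ] (ℱ : Filtration ℕ m0) (K : ℕ) (U : ℕ → Ω → ℝ)
    (l₀ : ℝ) (hl₀ : 0 < l₀)
    (hUmeas : ∀ k, Measurable (U k)) (hUint : ∀ k, Integrable (U k) μ)
    (hUnonneg : ∀ k, ∀ᵐ ω ∂μ, 0 ≤ U k ω)
    (hsum : ∀ᵐ ω ∂μ, ∑ k ∈ Finset.Icc 1 K, U k ω ≤ l₀)
    (r : ℕ) (hr : 1 ≤ r) :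
    ∫ ω, (∑ k ∈ Finset.Icc 1 K, (μ[U k|ℱ (k - 1)]) ω) ^ r ∂μ ≤
      (r.factorial : ℝ) * l₀ ^ r := by
  classical
  set b : ℕ → Ω → ℝ := fun i => μ[U (i + 1)|ℱ i] with hb
  set S : ℕ → Ω → ℝ := fun n ω => ∑ i ∈ Finset.range n, b i ω with hS
  -- rewrite the goal
  have hgoal_rw : ∀ ω, ∑ k ∈ Finset.Icc 1 K, (μ[U k|ℱ (k - 1)]) ω = S K ω := by
    intro ω
    rw [icc_sum_eq_range (fun k => (μ[U k|ℱ (k - 1)]) ω) K]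
    simp [hS, hb]
  simp_rw [hgoal_rw]
  -- basic facts
  have hble : ∀ i < K, b i ≤ᵐ[μ] fun _ => l₀ := by
    intro i hi
    have hUle : U (i + 1) ≤ᵐ[μ] fun _ => l₀ := by
      filter_upwards [hsum, ae_all_iff.2 hUnonneg] with ω h1 h2
      calc U (i + 1) ω ≤ ∑ k ∈ Finset.Icc 1 K, U k ω := by
            apply Finset.single_le_sum (fun k _ => h2 k)
            simp [Finset.mem_Icc]; omega
        _ ≤ l₀ := h1
    calc b i ≤ᵐ[μ] μ[(fun _ => l₀)|ℱ i] :=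
          condExp_mono (hUint _) (integrable_const _) hUle
      _ = fun _ => l₀ := condExp_const (ℱ.le i) l₀
  have hbnonneg : ∀ i, (fun _ => (0:ℝ)) ≤ᵐ[μ] b i := fun i => condExp_nonneg (hUnonneg (i + 1))
  -- one big a.e. event
  have hG : ∀ᵐ ω ∂μ, (∀ i, 0 ≤ b i ω) ∧ (∀ i, i < K → b i ω ≤ l₀) := by
    refine (ae_all_iff.2 hbnonneg).mono ?_ |>.and (ae_all_iff.2 fun i => ?_)
    · exact fun ω h i => h i
    · by_cases hi : i < K
      · filter_upwards [hble i hi] with ω h _; exact h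
      · filter_upwards with ω h; exact absurd h hi
  -- measurability of S n w.r.t. ℱ k for n ≤ k + 1
  have hSmeas : ∀ n k, n ≤ k + 1 → StronglyMeasurable[ℱ k] (S n) := by
    intro n k hnk
    have : StronglyMeasurable[ℱ k] (fun ω => ∑ i ∈ Finset.range n, b i ω) := by
      apply Finset.stronglyMeasurable_fun_sum
      intro i hi
      exact (stronglyMeasurable_condExp).mono (ℱ.mono (by
        simp only [Finset.mem_range] at hi; omega))
    exact this
  have hSmeas0 : ∀ n, StronglyMeasurable (S n) := fun n =>
    ((hSmeas n n (by omega)).mono (ℱ.le n))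
  -- S is a.e. nonneg, monotone, bounded
  have hSint : ∀ n, Integrable (S n) μ := by
    intro n
    exact integrable_finset_sum _ (fun i _ => integrable_condExp)
  have hSpow_bd : ∀ n, n ≤ K → ∀ m : ℕ, ∀ᵐ ω ∂μ, ‖S n ω ^ m‖ ≤ ((K : ℝ) * l₀) ^ m := by
    intro n hn m
    filter_upwards [hG] with ω ⟨h0, h1⟩
    have hnn : 0 ≤ S n ω := Finset.sum_nonneg fun i _ => h0 i
    have hub : S n ω ≤ (K : ℝ) * l₀ := by
      calc S n ω ≤ ∑ _i ∈ Finset.range n, l₀ := by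
            apply Finset.sum_le_sum
            intro i hi
            exact h1 i (by simp only [Finset.mem_range] at hi; omega)
        _ = (n : ℝ) * l₀ := by simp [mul_comm]
        _ ≤ (K : ℝ) * l₀ := by
            apply mul_le_mul_of_nonneg_right _ hl₀.le
            exact_mod_cast hn
    rw [Real.norm_eq_abs, abs_of_nonneg (pow_nonneg hnn m)]
    exact pow_le_pow_left₀ hnn hub m
  have hSpow_int : ∀ n, n ≤ K → ∀ m : ℕ, Integrable (fun ω => S n ω ^ m) μ := by
    intro n hn m
    exact Integrable.mono' (integrable_const (((K : ℝ) * l₀) ^ m))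
      ((hSmeas0 n).pow m).aestronglyMeasurable (hSpow_bd n hn m)
  have hmul_int : ∀ n, n ≤ K → ∀ m : ℕ, ∀ g : Ω → ℝ, Integrable g μ →
      Integrable (fun ω => S n ω ^ m * g ω) μ := by
    intro n hn m g hg
    exact Integrable.bdd_mul hg ((hSmeas0 n).pow m).aestronglyMeasurable (hSpow_bd n hn m)
  -- main induction
  have main : ∀ q : ℕ, ∫ ω, S K ω ^ q ∂μ ≤ (q.factorial : ℝ) * l₀ ^ q := by
    intro q
    induction q with
    | zero => simp
    | succ q ih =>
      -- step: ∫ S K ^ (q+1) ≤ (q+1) * l₀ * ∫ S K ^ q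
      have key : ∀ k, k < K →
          (∫ ω, S (k + 1) ω ^ (q + 1) ∂μ) - (∫ ω, S k ω ^ (q + 1) ∂μ) ≤
          (q + 1 : ℝ) * ∫ ω, S K ω ^ q * U (k + 1) ω ∂μ := by
        intro k hk
        have hk1 : k + 1 ≤ K := hk
        -- pointwise inequality
        have step1 : (∫ ω, S (k + 1) ω ^ (q + 1) ∂μ) - (∫ ω, S k ω ^ (q + 1) ∂μ) ≤
            (q + 1 : ℝ) * ∫ ω, S (k + 1) ω ^ q * b k ω ∂μ := by
          rw [← integral_sub (hSpow_int _ hk1 _) (hSpow_int _ (by omega) _), ← integral_const_mul]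
          apply integral_mono_ae
          · exact (hSpow_int _ hk1 _).sub (hSpow_int _ (by omega) _)
          · exact (hmul_int (k+1) hk1 q _ integrable_condExp).const_mul _
          filter_upwards [hG] with ω ⟨h0, h1⟩
          have hy : 0 ≤ S k ω := Finset.sum_nonneg fun i _ => h0 i
          have hxy : S k ω ≤ S (k + 1) ω := by
            simp only [hS, Finset.sum_range_succ]
            linarith [h0 k]
          have hd : S (k + 1) ω - S k ω = b k ω := by
            simp [hS, Finset.sum_range_succ]
          have := pow_sub_pow_le_aux q (S (k + 1) ω) (S k ω) hy hxy
          rw [hd] at this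
          calc S (k + 1) ω ^ (q + 1) - S k ω ^ (q + 1) ≤ (q + 1 : ℝ) * b k ω * S (k + 1) ω ^ q := this
            _ = (q + 1 : ℝ) * (S (k + 1) ω ^ q * b k ω) := by ring
        -- replace b k by U (k+1) via condexp
        have step2 : ∫ ω, S (k + 1) ω ^ q * b k ω ∂μ = ∫ ω, S (k + 1) ω ^ q * U (k + 1) ω ∂μ := by
          have hfmeas : StronglyMeasurable[ℱ k] (fun ω => S (k + 1) ω ^ q) :=
            (hSmeas (k + 1) k le_rfl).pow q
          have hprod : Integrable ((fun ω => S (k + 1) ω ^ q) * U (k + 1)) μ :=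
            hmul_int (k + 1) hk1 q _ (hUint (k + 1))
          have hcx := condExp_mul_of_stronglyMeasurable_left (m := ℱ k) hfmeas hprod (hUint (k + 1))
          have h1 : ∫ ω, ((fun ω => S (k + 1) ω ^ q) * U (k + 1)) ω ∂μ =
              ∫ ω, (μ[(fun ω => S (k + 1) ω ^ q) * U (k + 1)|ℱ k]) ω ∂μ :=
            (integral_condExp (ℱ.le k)).symm
          have h2 : ∫ ω, (μ[(fun ω => S (k + 1) ω ^ q) * U (k + 1)|ℱ k]) ω ∂μ =
              ∫ ω, ((fun ω => S (k + 1) ω ^ q) * μ[U (k + 1)|ℱ k]) ω ∂μ :=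
            integral_congr_ae hcx
          calc ∫ ω, S (k + 1) ω ^ q * b k ω ∂μ
              = ∫ ω, ((fun ω => S (k + 1) ω ^ q) * μ[U (k + 1)|ℱ k]) ω ∂μ := rfl
            _ = ∫ ω, (μ[(fun ω => S (k + 1) ω ^ q) * U (k + 1)|ℱ k]) ω ∂μ := h2.symm
            _ = ∫ ω, ((fun ω => S (k + 1) ω ^ q) * U (k + 1)) ω ∂μ := h1.symm
            _ = ∫ ω, S (k + 1) ω ^ q * U (k + 1) ω ∂μ := rfl
        -- replace S (k+1) by S K
        have step3 : ∫ ω, S (k + 1) ω ^ q * U (k + 1) ω ∂μ ≤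
            ∫ ω, S K ω ^ q * U (k + 1) ω ∂μ := by
          apply integral_mono_ae (hmul_int (k + 1) hk1 q _ (hUint (k + 1)))
            (hmul_int K le_rfl q _ (hUint (k + 1)))
          filter_upwards [hG, hUnonneg (k + 1)] with ω ⟨h0, h1⟩ hU0
          have hnn : 0 ≤ S (k + 1) ω := Finset.sum_nonneg fun i _ => h0 i
          have hle : S (k + 1) ω ≤ S K ω := by
            apply Finset.sum_le_sum_of_subset_of_nonneg
            · exact Finset.range_subset_range.2 hk1
            · intro i _ _; exact h0 i
          exact mul_le_mul_of_nonneg_right (pow_le_pow_left₀ hnn hle q) hU0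
        calc (∫ ω, S (k + 1) ω ^ (q + 1) ∂μ) - (∫ ω, S k ω ^ (q + 1) ∂μ)
            ≤ (q + 1 : ℝ) * ∫ ω, S (k + 1) ω ^ q * b k ω ∂μ := step1
          _ = (q + 1 : ℝ) * ∫ ω, S (k + 1) ω ^ q * U (k + 1) ω ∂μ := by rw [step2]
          _ ≤ (q + 1 : ℝ) * ∫ ω, S K ω ^ q * U (k + 1) ω ∂μ := by
              apply mul_le_mul_of_nonneg_left step3; positivity
      -- telescope
      have htel : ∫ ω, S K ω ^ (q + 1) ∂μ =
          ∑ k ∈ Finset.range K, ((∫ ω, S (k + 1) ω ^ (q + 1) ∂μ) - (∫ ω, S k ω ^ (q + 1) ∂μ)) := by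
        rw [Finset.sum_range_sub (fun n => ∫ ω, S n ω ^ (q + 1) ∂μ) K]
        simp [hS]
      have hsum_le : ∫ ω, S K ω ^ (q + 1) ∂μ ≤
          (q + 1 : ℝ) * ∑ k ∈ Finset.range K, ∫ ω, S K ω ^ q * U (k + 1) ω ∂μ := by
        rw [htel, Finset.mul_sum]
        apply Finset.sum_le_sum
        intro k hk
        exact key k (Finset.mem_range.mp hk)
      have hsum_eq : ∑ k ∈ Finset.range K, ∫ ω, S K ω ^ q * U (k + 1) ω ∂μ =
          ∫ ω, S K ω ^ q * (∑ k ∈ Finset.Icc 1 K, U k ω) ∂μ := by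
        rw [← integral_finset_sum]
        · congr 1
          ext ω
          rw [← Finset.mul_sum, icc_sum_eq_range (fun k => U k ω) K]
        · intro k _
          exact hmul_int K le_rfl q _ (hUint (k + 1))
      have hlast : ∫ ω, S K ω ^ q * (∑ k ∈ Finset.Icc 1 K, U k ω) ∂μ ≤
          l₀ * ∫ ω, S K ω ^ q ∂μ := by
        rw [← integral_const_mul]
        apply integral_mono_ae
        · exact hmul_int K le_rfl q _ (integrable_finset_sum _ fun k _ => hUint k)
        · exact (hSpow_int K le_rfl q).const_mul _
        filter_upwards [hG, hsum, ae_all_iff.2 hUnonneg] with ω ⟨h0, h1⟩ hs hU0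
        have hnn : 0 ≤ S K ω ^ q := pow_nonneg (Finset.sum_nonneg fun i _ => h0 i) q
        calc S K ω ^ q * (∑ k ∈ Finset.Icc 1 K, U k ω) ≤ S K ω ^ q * l₀ :=
              mul_le_mul_of_nonneg_left hs hnn
          _ = l₀ * S K ω ^ q := mul_comm _ _
      have hIq : 0 ≤ ∫ ω, S K ω ^ q ∂μ := by
        apply integral_nonneg_of_ae
        filter_upwards [hG] with ω ⟨h0, _⟩
        exact pow_nonneg (Finset.sum_nonneg fun i _ => h0 i) q
      calc ∫ ω, S K ω ^ (q + 1) ∂μ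
          ≤ (q + 1 : ℝ) * ∑ k ∈ Finset.range K, ∫ ω, S K ω ^ q * U (k + 1) ω ∂μ := hsum_le
        _ = (q + 1 : ℝ) * ∫ ω, S K ω ^ q * (∑ k ∈ Finset.Icc 1 K, U k ω) ∂μ := by rw [hsum_eq]
        _ ≤ (q + 1 : ℝ) * (l₀ * ∫ ω, S K ω ^ q ∂μ) := by
            apply mul_le_mul_of_nonneg_left hlast; positivity
        _ ≤ (q + 1 : ℝ) * (l₀ * ((q.factorial : ℝ) * l₀ ^ q)) := by
            apply mul_le_mul_of_nonneg_left _ (by positivity)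
            exact mul_le_mul_of_nonneg_left ih hl₀.le
        _ = ((q + 1).factorial : ℝ) * l₀ ^ (q + 1) := by
            rw [Nat.factorial_succ]
            push_cast
            ring
  exact main r
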